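/- Let q be a prime power and suppose (q-1)d + 1 = q^a·m with m not divisible by q and a ≥ 1. Then the Hamming graph H(q,d) has an efficient (1,k)-dominating function for every 1 ≤ k ≤ (q-1)d+1 that is a multiple of m. -/

import Mathlib

open SimpleGraph Finset Matrix Polynomial

/-- `f` is an efficient `(j,k)`-dominating function on `G`:
it takes values in `{0,…,j}` and sums to `k` over every closed neighbourhood. -/
def EffDom {V : Type*} [Fintype V] (G : SimpleGraph V) [DecidableRel G.Adj]
    (j k : ℕ) (f : V → ℕ) : Prop :=
  (∀ v, f v ≤ j) ∧ ∀ v : V, f v + ∑ u ∈ G.neighborFinset v, f u = k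

/-- The Hamming graph `H(q,d)`: vertices are the words of length `d` over an alphabet
of size `q`, adjacent iff at Hamming distance `1`. -/
def hammingGraph (q d : ℕ) : SimpleGraph (Fin d → Fin q) where
  Adj x y := hammingDist x y = 1
  symm := ⟨by intro x y h; rwa [hammingDist_comm]⟩
  loopless := ⟨by intro x h; simp [hammingDist_self] at h⟩

instance (q d : ℕ) : DecidableRel (hammingGraph q d).Adj :=
  fun _ _ => Nat.decEq _ _


lemma hammingDist_eq_one_iff {q d : ℕ} (x u : Fin d → Fin q) :
    hammingDist x u = 1 ↔ ∃ i, ∃ c, c ≠ x i ∧ u = Function.update x i c := by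
  constructor
  · intro hu
    rw [hammingDist, Finset.card_eq_one] at hu
    obtain ⟨i, hi⟩ := hu
    have hmemi : x i ≠ u i := by
      have : i ∈ ({i} : Finset (Fin d)) := Finset.mem_singleton_self i
      rw [← hi] at this
      simpa using this
    refine ⟨i, u i, hmemi.symm, ?_⟩
    funext j
    rcases eq_or_ne j i with rfl | hj
    · simp
    · have : j ∉ ({i} : Finset (Fin d)) := by simpa using hj
      rw [← hi] at this
      simp only [Finset.mem_filter, Finset.mem_univ, true_and, not_not] at this
      simp [Function.update, hj, this]
  · rintro ⟨i, c, hc, rfl⟩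
    rw [hammingDist, Finset.card_eq_one]
    refine ⟨i, ?_⟩
    ext j
    rcases eq_or_ne j i with rfl | hj
    · simp [hc.symm]
    · simp [Function.update, hj]

lemma hamming_sum {q d : ℕ} (x : Fin d → Fin q) (f : (Fin d → Fin q) → ℕ) :
    ∑ u ∈ (hammingGraph q d).neighborFinset x, f u
      = ∑ i : Fin d, ∑ c ∈ Finset.univ.erase (x i), f (Function.update x i c) := by
  have hN : (hammingGraph q d).neighborFinset x
      = Finset.univ.biUnion
          (fun i => (Finset.univ.erase (x i)).image (fun c => Function.update x i c)) := by
    ext u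
    simp only [mem_neighborFinset, Finset.mem_biUnion, Finset.mem_image, Finset.mem_erase,
      Finset.mem_univ, true_and]
    change hammingDist x u = 1 ↔ _
    rw [hammingDist_eq_one_iff]
    constructor
    · rintro ⟨i, c, hc, rfl⟩; exact ⟨i, c, ⟨hc, trivial⟩, rfl⟩
    · rintro ⟨i, c, ⟨hc, -⟩, rfl⟩; exact ⟨i, c, hc, rfl⟩
  rw [hN, Finset.sum_biUnion]
  · refine Finset.sum_congr rfl fun i _ => ?_
    rw [Finset.sum_image]
    intro c _ c' _ hcc
    have := congrFun hcc i
    simpa using this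
  · intro i _ i' _ hii
    simp only [Finset.disjoint_left, Finset.mem_image, Finset.mem_erase, Finset.mem_univ]
    rintro u ⟨c, ⟨hc, -⟩, rfl⟩ ⟨c', ⟨hc', -⟩, hu⟩
    have := congrFun hu i
    simp [Function.update, hii] at this
    exact hc this.symm


variable {F W : Type} [Field F] [Fintype F] [AddCommGroup W] [Module F W] [Finite W]

noncomputable instance : Fintype (Projectivization F W) := by
  haveI : Finite (Projectivization F W) :=
    inferInstanceAs (Finite (Quotient (projectivizationSetoid F W)))
  exact Fintype.ofFinite _

noncomputable def projEquiv (F W : Type) [Field F] [Fintype F] [AddCommGroup W] [Module F W] [Finite W] :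
    Projectivization F W × {t : F // t ≠ 0} ≃ {v : W // v ≠ 0} := by
  refine Equiv.ofBijective
    (fun Pt => ⟨Pt.2.1 • Pt.1.rep, smul_ne_zero Pt.2.2 Pt.1.rep_nonzero⟩) ⟨?_, ?_⟩
  · rintro ⟨P, t, ht⟩ ⟨P', t', ht'⟩ hPP
    have heq : (t : F) • P.rep = (t' : F) • P'.rep := congrArg Subtype.val hPP
    have hP : P = P' := by
      have h1 : Projectivization.mk F ((t:F) • P.rep) (smul_ne_zero ht P.rep_nonzero)
          = Projectivization.mk F P'.rep P'.rep_nonzero := by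
        rw [Projectivization.mk_eq_mk_iff']
        exact ⟨t', heq.symm⟩
      have h2 : Projectivization.mk F ((t:F) • P.rep) (smul_ne_zero ht P.rep_nonzero)
          = Projectivization.mk F P.rep P.rep_nonzero := by
        rw [Projectivization.mk_eq_mk_iff']
        exact ⟨t, rfl⟩
      rw [Projectivization.mk_rep] at h1 h2
      rw [← h2, h1]
    subst hP
    have ht2 : (t : F) = t' := by
      have := sub_eq_zero.2 heq
      rw [← sub_smul] at this
      rcases smul_eq_zero.1 this with h | h
      · exact sub_eq_zero.1 h
      · exact absurd h P.rep_nonzero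
    have : (⟨t, ht⟩ : {t : F // t ≠ 0}) = ⟨t', ht'⟩ := Subtype.ext ht2
    rw [this]
  · rintro ⟨v, hv⟩
    obtain ⟨u, hu⟩ := Projectivization.exists_smul_eq_mk_rep F v hv
    refine ⟨⟨Projectivization.mk F v hv, ⟨(u⁻¹ : Fˣ), (u⁻¹ : Fˣ).ne_zero⟩⟩, ?_⟩
    ext
    show ((u⁻¹ : Fˣ) : F) • (Projectivization.mk F v hv).rep = v
    rw [← hu, Units.smul_def, smul_smul]
    simp

lemma projCard (F W : Type) [Field F] [Fintype F] [AddCommGroup W] [Module F W] [Fintype W] :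
    Fintype.card (Projectivization F W) * (Fintype.card F - 1) = Fintype.card W - 1 := by
  classical
  have e2 := Fintype.card_congr (projEquiv F W)
  rw [Fintype.card_prod] at e2
  have cF : Fintype.card {t : F // t ≠ 0} = Fintype.card F - 1 := by
    rw [Fintype.card_subtype_compl (fun t : F => t = 0), Fintype.card_subtype_eq]
  have cW : Fintype.card {v : W // v ≠ 0} = Fintype.card W - 1 := by
    rw [Fintype.card_subtype_compl (fun v : W => v = 0), Fintype.card_subtype_eq]
  rw [cF, cW] at e2
  exact e2

lemma projEquiv_apply (F W : Type) [Field F] [Fintype F] [AddCommGroup W] [Module F W] [Finite W]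
    (Pt : Projectivization F W × {t : F // t ≠ 0}) :
    ((projEquiv F W Pt : {v : W // v ≠ 0}) : W) = (Pt.2 : F) • Pt.1.rep := rfl

lemma construction {F : Type} [Field F] [Fintype F] {q d a m c : ℕ}
    (hF : Fintype.card F = q) (hd : (q - 1) * d + 1 = q ^ a * m) (ha : 1 ≤ a)
    (hc1 : 1 ≤ c) (hc2 : c ≤ q ^ a) :
    ∃ f, EffDom (hammingGraph q d) 1 (m * c) f := by
  classical
  set W : Type := Fin a → F with hW
  -- basic numerology
  have hq2 : 2 ≤ q := by rw [← hF]; exact Fintype.one_lt_card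
  have hqa1 : 1 ≤ q ^ a := Nat.one_le_pow _ _ (by omega)
  have hm1 : 1 ≤ m := by
    rcases Nat.eq_zero_or_pos m with rfl | h
    · simp at hd
    · exact h
  -- m ≡ 1 mod (q-1)
  have hmod : (q - 1) ∣ (m - 1) := by
    have h1 : 1 ≡ q [MOD q - 1] := (Nat.modEq_iff_dvd' (by omega)).2 dvd_rfl
    have h2 : 1 ≡ q ^ a [MOD q - 1] := by simpa using h1.pow a
    have h3 : m ≡ q ^ a * m [MOD q - 1] := by
      calc m = 1 * m := (one_mul m).symm
        _ ≡ q ^ a * m [MOD q - 1] := h2.mul_right m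
    have h4 : (q - 1) * d + 1 ≡ 0 * d + 1 [MOD q - 1] :=
      (Nat.ModEq.mul_right d (Nat.modEq_zero_iff_dvd.2 dvd_rfl)).add_right 1
    have h5 : m ≡ 1 [MOD q - 1] := by
      calc m ≡ q ^ a * m [MOD q - 1] := h3
        _ = (q - 1) * d + 1 := hd.symm
        _ ≡ 0 * d + 1 [MOD q - 1] := h4
        _ = 1 := by ring
    exact (Nat.modEq_iff_dvd' hm1).1 h5.symm
  obtain ⟨r, hr0⟩ := hmod
  have hr : m = r * (q - 1) + 1 := by rw [mul_comm]; omega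
  -- cardinalities
  have hcardW : Fintype.card W = q ^ a := by
    show Fintype.card (Fin a → F) = q ^ a
    rw [Fintype.card_fun, hF, Fintype.card_fin]
  set N : ℕ := Fintype.card (Projectivization F W) with hNdef
  have hPN : N * (q - 1) = q ^ a - 1 := by
    have := projCard F W
    rwa [hF, hcardW, ← hNdef] at this
  have hdcard : d = m * N + r := by
    have key : (q - 1) * d = (q - 1) * (m * N + r) := by
      have e1 : (q - 1) * (m * N + r) = m * (N * (q - 1)) + r * (q - 1) := by ring
      rw [e1, hPN]
      have e2 : m * (q ^ a - 1) = q ^ a * m - m := by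
        rw [Nat.mul_sub, mul_one, mul_comm]
      rw [e2]
      have hZ : r * (q - 1) = m - 1 := by rw [hr]; simp
      rw [hZ]
      have hge : m ≤ q ^ a * m := Nat.le_mul_of_pos_left m (by positivity)
      omega
    exact Nat.eq_of_mul_eq_mul_left (by omega) key
  -- the index equivalence and weights
  have hcards : Fintype.card ((Fin m × Projectivization F W) ⊕ Fin r) = Fintype.card (Fin d) := by
    simp [Fintype.card_sum, Fintype.card_prod, hdcard]
    exact Or.inl (by convert hNdef.symm)
  let E : (Fin m × Projectivization F W) ⊕ Fin r ≃ Fin d := Fintype.equivOfCardEq hcards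
  let w : Fin d → W := fun i =>
    Sum.elim (fun jP : Fin m × Projectivization F W => jP.2.rep) (fun _ => (0 : W)) (E.symm i)
  -- the target set S
  obtain ⟨S, -, hS⟩ := Finset.exists_subset_card_eq
    (show c ≤ (Finset.univ : Finset W).card by rw [Finset.card_univ, hcardW]; exact hc2)
  -- the coordinate coding
  let e : Fin q ≃ F := Fintype.equivOfCardEq (by rw [Fintype.card_fin, hF])
  let σ : (Fin d → Fin q) → W := fun x => ∑ i, e (x i) • w i
  refine ⟨fun x => if σ x ∈ S then 1 else 0, fun v => by dsimp only; split <;> omega, ?_⟩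
  intro x
  rw [hamming_sum]
  -- Step A : update formula
  have hupd : ∀ (i : Fin d) (c' : Fin q),
      σ (Function.update x i c') = σ x + (e c' - e (x i)) • w i := by
    intro i c'
    have hfun : (fun j => e (Function.update x i c' j) • w j)
        = Function.update (fun j => e (x j) • w j) i (e c' • w i) := by
      funext j
      rcases eq_or_ne j i with rfl | hj
      · simp
      · simp [Function.update, hj]
    have h1 : σ (Function.update x i c') = e c' • w i + ∑ j ∈ Finset.univ \ {i}, e (x j) • w j := by
      show (∑ j, e (Function.update x i c' j) • w j) = _
      rw [show (∑ j, e (Function.update x i c' j) • w j)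
          = ∑ j, Function.update (fun j => e (x j) • w j) i (e c' • w i) j from by rw [← hfun]]
      exact Finset.sum_update_of_mem (Finset.mem_univ i) _ _
    have h2 : σ x = e (x i) • w i + ∑ j ∈ Finset.univ \ {i}, e (x j) • w j := by
      show (∑ j, e (x j) • w j) = _
      rw [show (∑ j, e (x j) • w j)
          = ∑ j, Function.update (fun j => e (x j) • w j) i (e (x i) • w i) j from by
        congr 1
        funext j
        rcases eq_or_ne j i with rfl | hj
        · simp
        · simp [Function.update, hj]]
      exact Finset.sum_update_of_mem (Finset.mem_univ i) _ _
    rw [h1, h2, sub_smul]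
    abel
  -- Step B : reindex inner sums over nonzero scalars
  have hinner : ∀ i : Fin d,
      (∑ c' ∈ Finset.univ.erase (x i), if σ (Function.update x i c') ∈ S then 1 else 0)
        = ∑ t ∈ Finset.univ.erase (0 : F), (if σ x + t • w i ∈ S then 1 else 0) := by
    intro i
    refine Finset.sum_nbij' (fun c' => e c' - e (x i)) (fun t => e.symm (t + e (x i)))
      ?_ ?_ ?_ ?_ ?_
    · intro c' hc'
      simp only [Finset.mem_erase, Finset.mem_univ, and_true] at hc' ⊢
      intro h0
      exact hc' (by
        have : e c' = e (x i) := by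
          have := sub_eq_zero.1 h0
          exact this
        exact e.injective this)
    · intro t ht
      simp only [Finset.mem_erase, Finset.mem_univ, and_true] at ht ⊢
      intro hEq
      apply ht
      have : e (e.symm (t + e (x i))) = e (x i) := by rw [hEq]
      rw [Equiv.apply_symm_apply] at this
      linear_combination this -- t + e(x i) = e(x i) → t = 0
    · intro c' _
      simp
    · intro t _
      simp
    · intro c' _
      rw [hupd i c']
  simp only [hinner]
  -- Step C : global reindexing
  set s : W := σ x with hsdef
  set T : W → ℕ := fun w₀ => ∑ t ∈ Finset.univ.erase (0 : F), (if s + t • w₀ ∈ S then 1 else 0)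
    with hTdef
  have hsumT : (∑ i : Fin d, T (w i))
      = m * (∑ P : Projectivization F W, T P.rep) + r * T 0 := by
    rw [← Equiv.sum_comp E (fun i => T (w i))]
    have : ∀ z, T (w (E z))
        = Sum.elim (fun jP : Fin m × Projectivization F W => T jP.2.rep) (fun _ => T 0) z := by
      intro z
      rcases z with z | z <;> simp [w, Equiv.symm_apply_apply]
    rw [Fintype.sum_congr _ _ this, Fintype.sum_sum_type]
    simp [Fintype.sum_prod_type, Finset.sum_const, Finset.card_univ, mul_comm]
  have hT0 : T 0 = (q - 1) * (if s ∈ S then 1 else 0) := by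
    rw [hTdef]
    simp only [smul_zero, add_zero]
    rw [Finset.sum_const, Finset.card_erase_of_mem (Finset.mem_univ _), Finset.card_univ, hF]
    simp [mul_comm]
  have hTP : (∑ P : Projectivization F W, T P.rep)
      = ∑ v ∈ Finset.univ.erase (0 : W), (if s + v ∈ S then 1 else 0) := by
    have hsub : ∀ (g : W → ℕ), (∑ v ∈ Finset.univ.erase (0 : W), g v)
        = ∑ v : {v : W // v ≠ 0}, g v := by
      intro g
      exact Finset.sum_subtype _ (by intro v; simp [eq_comm]) g
    rw [hsub]
    rw [← Equiv.sum_comp (projEquiv F W) (fun v : {v : W // v ≠ 0} =>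
      (if s + (v : W) ∈ S then 1 else 0 : ℕ))]
    have : ∀ Pt : Projectivization F W × {t : F // t ≠ 0},
        (if s + ((projEquiv F W Pt : {v : W // v ≠ 0}) : W) ∈ S then (1:ℕ) else 0)
          = (if s + (Pt.2 : F) • Pt.1.rep ∈ S then 1 else 0) := by
      intro Pt; rw [projEquiv_apply]
    rw [Fintype.sum_congr _ _ this, Fintype.sum_prod_type]
    refine Finset.sum_congr rfl fun P _ => ?_
    have hsub2 : ∀ (g : F → ℕ), (∑ t ∈ Finset.univ.erase (0 : F), g t)
        = ∑ t : {t : F // t ≠ 0}, g t := by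
      intro g
      exact Finset.sum_subtype _ (by intro v; simp [eq_comm]) g
    show (∑ t ∈ Finset.univ.erase (0 : F), if s + t • P.rep ∈ S then (1:ℕ) else 0) = _
    rw [hsub2]
  have hfull : (if s ∈ S then 1 else 0)
      + (∑ v ∈ Finset.univ.erase (0 : W), (if s + v ∈ S then 1 else 0)) = c := by
    have h0 : (∑ v : W, (if s + v ∈ S then 1 else 0))
        = (if s ∈ S then 1 else 0)
          + ∑ v ∈ Finset.univ.erase (0 : W), (if s + v ∈ S then 1 else 0) := by
      rw [← Finset.add_sum_erase Finset.univ _ (Finset.mem_univ (0 : W))]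
      simp
    have h1 : (∑ v : W, (if s + v ∈ S then 1 else 0)) = c := by
      have h1a : (∑ v : W, (if s + v ∈ S then (1:ℕ) else 0))
          = ∑ u : W, (if u ∈ S then (1:ℕ) else 0) :=
        Fintype.sum_equiv (Equiv.addLeft s) _ _ (fun v => by simp; congr)
      rw [h1a, Finset.sum_ite_mem, Finset.univ_inter, Finset.sum_const, hS, smul_eq_mul, mul_one]
    omega
  rw [hsumT, hT0, hTP]
  -- final arithmetic
  rw [hr]
  set A := ∑ v ∈ Finset.univ.erase (0 : W), (if s + v ∈ S then (1:ℕ) else 0)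
  set χ := (if s ∈ S then (1:ℕ) else 0)
  have : χ + ((r * (q - 1) + 1) * A + r * ((q - 1) * χ)) = (r * (q - 1) + 1) * (χ + A) := by ring
  rw [this, hfull]

theorem stmt17 (q d a m : ℕ) (hq : IsPrimePow q)
    (h : (q - 1) * d + 1 = q ^ a * m) (hm : ¬ q ∣ m) (ha : 1 ≤ a)
    (k : ℕ) (hk1 : 1 ≤ k) (hk2 : k ≤ (q - 1) * d + 1) (hmk : m ∣ k) :
    ∃ f, EffDom (hammingGraph q d) 1 k f := by
  obtain ⟨p, n, hp, hn, rfl⟩ := hq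
  haveI := Fact.mk hp.nat_prime
  haveI : Fintype (GaloisField p n) := Fintype.ofFinite _
  have hF : Fintype.card (GaloisField p n) = p ^ n := by
    rw [← Nat.card_eq_fintype_card, GaloisField.card p n (by omega)]
  obtain ⟨c, rfl⟩ := hmk
  have hm1 : 1 ≤ m := Nat.pos_of_ne_zero (fun hh => by simp [hh] at hk1)
  have hc1 : 1 ≤ c := Nat.pos_of_ne_zero (fun hh => by simp [hh] at hk1)
  have hc2 : c ≤ (p ^ n) ^ a := by
    rw [h] at hk2
    have : m * c ≤ m * (p ^ n) ^ a := by
      calc m * c ≤ (p ^ n) ^ a * m := hk2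
        _ = m * (p ^ n) ^ a := mul_comm _ _
    exact Nat.le_of_mul_le_mul_left this hm1
  exact construction hF h ha hc1 hc2
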